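/- Let H be a complex Hilbert space and Z ∈ B(H). Then ‖exp(Z)‖ ≤ exp(‖Z₊‖), where Z₊ denotes the positive part (given by the continuous functional calculus) of the selfadjoint operator Re Z := ½(Z + Z*). -/

import Mathlib

open ContinuousLinearMap
open scoped InnerProductSpace

noncomputable section

/-- The real part `Re T = ½(T + T*)` of a bounded operator. -/
def reOp {H : Type*} [NormedAddCommGroup H] [InnerProductSpace ℂ H] [CompleteSpace H]
    (T : H →L[ℂ] H) : H →L[ℂ] H :=
  (2 : ℂ)⁻¹ • (T + adjoint T)

/-- The positive part `T₊ = (Re T)₊`, obtained by applying `t ↦ max t 0` to `Re T`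
via the continuous functional calculus. -/
def posPartOp {H : Type*} [NormedAddCommGroup H] [InnerProductSpace ℂ H] [CompleteSpace H]
    (T : H →L[ℂ] H) : H →L[ℂ] H :=
  cfc (fun t : ℝ => max t 0) (reOp T)

lemma aux_norm_exp_le_one {H : Type*} [NormedAddCommGroup H] [InnerProductSpace ℂ H]
    [CompleteSpace H] (W : H →L[ℂ] H)
    (hW : ∀ v : H, (⟪W v, v⟫_ℂ).re ≤ 0) :
    ‖NormedSpace.exp W‖ ≤ 1 := by
  refine opNorm_le_bound _ zero_le_one fun x => ?_
  rw [one_mul]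
  set L : (H →L[ℂ] H) →L[ℝ] H :=
    ((ContinuousLinearMap.apply ℂ H x).restrictScalars ℝ) with hLdef
  set f : ℝ → H := fun t => L (NormedSpace.exp (t • W)) with hfdef
  have hf : ∀ t : ℝ, HasDerivAt f (W (f t)) t := by
    intro t
    have h1 := hasDerivAt_exp_smul_const' (𝕂 := ℝ) W t
    have h2 : HasDerivAt f (W (f t)) t := L.hasFDerivAt.comp_hasDerivAt t h1
    convert h2 using 1
  set g : ℝ → ℝ := fun t => (⟪f t, f t⟫_ℂ).re with hgdef
  have hg : ∀ t : ℝ, HasDerivAt g (2 * (⟪W (f t), f t⟫_ℂ).re) t := by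
    intro t
    have h1 := (hf t).inner ℂ (hf t)
    have h2 : HasDerivAt g (Complex.reCLM (⟪f t, W (f t)⟫_ℂ + ⟪W (f t), f t⟫_ℂ)) t :=
      Complex.reCLM.hasFDerivAt.comp_hasDerivAt t h1
    convert h2 using 1
    show 2 * (⟪W (f t), f t⟫_ℂ).re = (⟪f t, W (f t)⟫_ℂ + ⟪W (f t), f t⟫_ℂ).re
    rw [← inner_conj_symm (W (f t)) (f t), Complex.add_re, Complex.conj_re]
    ring
  have mono : AntitoneOn g (Set.Icc (0:ℝ) 1) := by
    apply antitoneOn_of_deriv_nonpos (convex_Icc 0 1)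
    · exact fun t _ => ((hg t).continuousAt).continuousWithinAt
    · exact fun t _ => ((hg t).differentiableAt).differentiableWithinAt
    · intro t _
      rw [(hg t).deriv]
      have := hW (f t)
      linarith
  have h01 : g 1 ≤ g 0 :=
    mono (by norm_num) (by norm_num) zero_le_one
  have hf0 : f 0 = x := by simp [hfdef, hLdef]
  have hf1 : f 1 = NormedSpace.exp W x := by
    simp [hfdef, hLdef]
  have h01' : (⟪f 1, f 1⟫_ℂ).re ≤ (⟪f 0, f 0⟫_ℂ).re := h01
  rw [hf0, hf1] at h01'
  have e1 : (⟪NormedSpace.exp W x, NormedSpace.exp W x⟫_ℂ).re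
      = ‖NormedSpace.exp W x‖ ^ 2 := by
    rw [← RCLike.re_to_complex, inner_self_eq_norm_sq]
  have e2 : (⟪x, x⟫_ℂ).re = ‖x‖ ^ 2 := by
    rw [← RCLike.re_to_complex, inner_self_eq_norm_sq]
  rw [e1, e2] at h01'
  nlinarith [norm_nonneg (NormedSpace.exp W x), norm_nonneg x]


theorem norm_exp_le_exp_norm_posPart
    {H : Type*} [NormedAddCommGroup H] [InnerProductSpace ℂ H] [CompleteSpace H]
    (Z : H →L[ℂ] H) :
    ‖NormedSpace.exp Z‖ ≤ Real.exp ‖posPartOp Z‖ := by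
  set c : ℝ := ‖posPartOp Z‖ with hc
  have hsa : IsSelfAdjoint (reOp Z) := by
    rw [IsSelfAdjoint, reOp, star_smul, star_add, star_eq_adjoint, star_eq_adjoint,
      adjoint_adjoint]
    rw [add_comm]
    norm_num
  have hsa' : IsSelfAdjoint (posPartOp Z) := cfc_predicate _ _
  have h1 : reOp Z ≤ posPartOp Z := by
    conv_lhs => rw [← cfc_id ℝ (reOp Z) hsa]
    exact cfc_mono fun x _ => le_max_left x 0
  have h2 : posPartOp Z ≤ algebraMap ℝ (H →L[ℂ] H) c :=
    hsa'.le_algebraMap_norm_self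
  have hle : reOp Z ≤ algebraMap ℝ (H →L[ℂ] H) c := h1.trans h2
  have hre : ∀ v : H, (⟪(reOp Z) v, v⟫_ℂ).re = (⟪Z v, v⟫_ℂ).re := by
    intro v
    have hv : (reOp Z) v = (2:ℂ)⁻¹ • (Z v + adjoint Z v) := rfl
    rw [hv, inner_smul_left, inner_add_left, adjoint_inner_left,
      ← inner_conj_symm (Z v) v]
    generalize ⟪v, Z v⟫_ℂ = w
    simp [Complex.mul_re]
    ring
  have hpt : ∀ v : H, (⟪Z v, v⟫_ℂ).re ≤ c * ‖v‖ ^ 2 := by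
    intro v
    have hpos : ((algebraMap ℝ (H →L[ℂ] H) c) - reOp Z).IsPositive :=
      (ContinuousLinearMap.le_def _ _).mp hle
    have h0 := hpos.inner_nonneg_left v
    simp only [sub_apply, inner_sub_left] at h0
    have halg : (algebraMap ℝ (H →L[ℂ] H) c) v = (c : ℂ) • v := by
      rw [Algebra.algebraMap_eq_smul_one]
      simp
    rw [halg, inner_smul_left, inner_self_eq_norm_sq_to_K] at h0
    simp only [map_sub, RCLike.re_to_complex, Complex.conj_ofReal,
      ← Complex.ofReal_pow, ← Complex.ofReal_mul, Complex.ofReal_re] at h0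
    replace h0 := (Complex.le_def.mp h0).1
    simp only [Complex.zero_re, Complex.sub_re, Complex.ofReal_re] at h0
    rw [hre v] at h0
    simp at h0
    norm_cast at h0
  set W : H →L[ℂ] H := Z - algebraMap ℂ (H →L[ℂ] H) (c : ℂ) with hW
  have hWpt : ∀ v : H, (⟪W v, v⟫_ℂ).re ≤ 0 := by
    intro v
    have hWv : W v = Z v - (c : ℂ) • v := by
      simp [hW, Algebra.algebraMap_eq_smul_one]
    rw [hWv, inner_sub_left, inner_smul_left, inner_self_eq_norm_sq_to_K]
    have := hpt v
    simp only [Complex.sub_re]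
    simp
    norm_cast
  have hcomm : Commute (algebraMap ℂ (H →L[ℂ] H) (c:ℂ)) W := Algebra.commutes _ _
  have hZ : Z = algebraMap ℂ (H →L[ℂ] H) (c:ℂ) + W := by simp [hW]
  rw [hZ, NormedSpace.exp_add_of_commute_of_mem_ball (𝕂 := ℂ) hcomm
      ((NormedSpace.expSeries_radius_eq_top ℂ (H →L[ℂ] H)).symm ▸ edist_lt_top _ _)
      ((NormedSpace.expSeries_radius_eq_top ℂ (H →L[ℂ] H)).symm ▸ edist_lt_top _ _), ← NormedSpace.algebraMap_exp_comm,
    ← Algebra.smul_def, norm_smul]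
  have hnorm : ‖NormedSpace.exp ((c:ℂ))‖ = Real.exp c := by
    rw [← Complex.exp_eq_exp_ℂ]
    simp [Complex.norm_exp]
  rw [hnorm]
  calc Real.exp c * ‖NormedSpace.exp W‖ ≤ Real.exp c * 1 :=
        mul_le_mul_of_nonneg_left (aux_norm_exp_le_one W hWpt) (Real.exp_pos c).le
    _ = Real.exp c := mul_one _
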